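/- Let Γ be a group and G ⫳ Γ a normal subgroup, with Γ acting on G by conjugation. Suppose S₀ ⊆ G and S = Γ·S₀, and let R' ⊆ F(S) be a Γ-invariant set of relations such that for all s₀ ∈ S₀ and u ∈ S, s₀ u s₀⁻¹ ≡ ^{s₀} u modulo R'. Then for all s, t ∈ S, s t s⁻¹ ≡ ^s t modulo R'. -/

import Mathlib

namespace Stmt18

variable {Γ : Type} [Group Γ] (G : Subgroup Γ) [G.Normal]

/-- The set `S = Γ·S₀` of conjugates of elements of `S₀ ⊆ G` by elements of `Γ`. -/
def Sset (S₀ : Set G) : Set G :=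
  {g | ∃ γ : Γ, ∃ s ∈ S₀, MulAut.conjNormal γ s = g}

lemma conj_mem_Sset (S₀ : Set G) (γ : Γ) {g : G} (hg : g ∈ Sset G S₀) :
    MulAut.conjNormal γ g ∈ Sset G S₀ := by
  obtain ⟨γ', s, hs, rfl⟩ := hg
  exact ⟨γ * γ', s, hs, by rw [map_mul]; rfl⟩

/-- The induced `Γ`-action (by conjugation) on the free group `F(S)`. -/
def actF (S₀ : Set G) (γ : Γ) : FreeGroup (Sset G S₀) →* FreeGroup (Sset G S₀) :=
  FreeGroup.map fun x => ⟨MulAut.conjNormal γ (x : G), conj_mem_Sset G S₀ γ x.2⟩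

/-- Let `G ⊴ Γ`, `S = Γ·S₀`, and let `R' ⊆ F(S)` be a `Γ`-invariant set of relations
such that `s₀ u s₀⁻¹ ≡ ^{s₀} u` modulo `R'` for all `s₀ ∈ S₀` and `u ∈ S`.  Then
`s t s⁻¹ ≡ ^s t` modulo `R'` for all `s, t ∈ S`. -/
theorem stmt_18 (S₀ : Set G)
    (R' : Set (FreeGroup (Sset G S₀)))
    (hRinv : ∀ γ : Γ, ∀ r ∈ R', actF G S₀ γ r ∈ Subgroup.normalClosure R')
    (hbase : ∀ s₀ : Sset G S₀, (s₀ : G) ∈ S₀ → ∀ u : Sset G S₀,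
      FreeGroup.of s₀ * FreeGroup.of u * (FreeGroup.of s₀)⁻¹ *
        (FreeGroup.of (⟨MulAut.conjNormal ((s₀ : G) : Γ) (u : G),
          conj_mem_Sset G S₀ ((s₀ : G) : Γ) u.2⟩ : Sset G S₀))⁻¹ ∈
        Subgroup.normalClosure R') :
    ∀ s t : Sset G S₀,
      FreeGroup.of s * FreeGroup.of t * (FreeGroup.of s)⁻¹ *
        (FreeGroup.of (⟨MulAut.conjNormal ((s : G) : Γ) (t : G),
          conj_mem_Sset G S₀ ((s : G) : Γ) t.2⟩ : Sset G S₀))⁻¹ ∈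
        Subgroup.normalClosure R' := by
  intro s t
  obtain ⟨γ, s₀, hs₀, hconj⟩ := s.2
  have hs₀S : (s₀ : G) ∈ Sset G S₀ := ⟨1, s₀, hs₀, by simp⟩
  set N := Subgroup.normalClosure R' with hN
  -- actF γ maps N into N
  have hact : ∀ x ∈ N, actF G S₀ γ x ∈ N := by
    intro x hx
    haveI : (N.comap (actF G S₀ γ)).Normal :=
      Subgroup.Normal.comap (Subgroup.normalClosure_normal) _
    have hle : N ≤ N.comap (actF G S₀ γ) :=
      Subgroup.normalClosure_le_normal (fun r hr => hRinv γ r hr)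
    exact hle hx
  set u : Sset G S₀ :=
    ⟨MulAut.conjNormal γ⁻¹ (t : G), conj_mem_Sset G S₀ γ⁻¹ t.2⟩ with hu
  have hb := hact _ (hbase ⟨(s₀ : G), hs₀S⟩ hs₀ u)
  have key : actF G S₀ γ
      (FreeGroup.of ⟨(s₀ : G), hs₀S⟩ * FreeGroup.of u * (FreeGroup.of ⟨(s₀ : G), hs₀S⟩)⁻¹ *
        (FreeGroup.of (⟨MulAut.conjNormal ((s₀ : G) : Γ) (u : G),
          conj_mem_Sset G S₀ ((s₀ : G) : Γ) u.2⟩ : Sset G S₀))⁻¹)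
      = FreeGroup.of s * FreeGroup.of t * (FreeGroup.of s)⁻¹ *
        (FreeGroup.of (⟨MulAut.conjNormal ((s : G) : Γ) (t : G),
          conj_mem_Sset G S₀ ((s : G) : Γ) t.2⟩ : Sset G S₀))⁻¹ := by
    have e1 : (⟨MulAut.conjNormal γ (s₀ : G), conj_mem_Sset G S₀ γ hs₀S⟩ : Sset G S₀) = s := by
      apply Subtype.ext
      exact hconj
    have hsΓ : ((s : G) : Γ) = γ * ((s₀ : G) : Γ) * γ⁻¹ := by
      rw [← hconj, MulAut.conjNormal_apply]
    simp only [actF, map_mul, map_inv, FreeGroup.map.of, e1]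
    congr 1
    · congr 3
      apply Subtype.ext
      apply Subtype.ext
      simp [MulAut.conjNormal_apply, MulAut.conjNormal_inv_apply, hu]
    · congr 2
      apply Subtype.ext
      apply Subtype.ext
      simp [MulAut.conjNormal_apply, MulAut.conjNormal_inv_apply, hsΓ, hu]
  rw [key] at hb
  exact hb

end Stmt18
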